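/- Let A be a real number with 0 < A < d2*(d2-1)^2/(d1^2*(2*d1+d2)). Then for every k ∈ (0,1), the quadratic function l ↦ ζ(A,k,l) has exactly two real roots, both roots are positive, and the smaller root is strictly less than ν1(A,k). -/

import Mathlib

noncomputable section

namespace PaperDefs

/-- The polynomial `P_X`. -/
def PX (d1 d2 k : ℝ) : ℝ :=
  ((d2*(d1*d2 - 2*d1 - d2 + 1)*k^2 + 2*(d2-1)*(d1-1)*d1*k + d1^2*(d1-1))*(1-k))/(d1*(d1+d2-1))

/-- The polynomial `Q_X`. -/
def QX (d1 d2 k : ℝ) : ℝ :=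
  4*k*(1 + d2*k/(2*d1))*(d1 + d2*k + d2*k/(2*d1)) +
    (2 + 2*k + 3*d2*k/d1)*(d1 + d2*k^2 - (d1 + d2*k)^2)/(d1+d2-1)

/-- The coefficient `ω₂`. -/
def omega2 (d1 d2 k : ℝ) : ℝ :=
  (2*d1^2*d2^2 - d1*d2^3 + d2^3 - d2^2)*k^3
    + (4*d1^3*d2 - 4*d1^2*d2^2 - 2*d1^2*d2 + 4*d1*d2^2 - 2*d1*d2)*k^2
    + (2*d1^4 - 5*d1^3*d2 - 2*d1^3 + 5*d1^2*d2)*k - 2*d1^4 + 2*d1^3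

/-- The coefficient `ω₁`. -/
def omega1 (d1 d2 k : ℝ) : ℝ :=
  (d1*d2^3 - 4*d1*d2^2 - d2^3 + 3*d2^2)*k^3
    + (2*d1^2*d2^2 - 8*d1^2*d2 + 8*d1*d2 - 2*d2^2)*k^2
    + (d1^3*d2 - 4*d1^3 + 5*d1^2*d2 + 4*d1^2 - 6*d1*d2)*k + 4*d1^3 - 4*d1^2

/-- The coefficient `ω₀`. -/
def omega0 (d1 d2 k : ℝ) : ℝ :=
  (d1*d2^3 - 2*d1*d2^2 - d2^3 - 2*d1*d2 + d2^2)*k^2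
    + (2*d1^2*d2^2 - 2*d1^2*d2 - 2*d1*d2^2 - 4*d1^2 + 4*d1*d2)*k
    + d1^3*d2 - d1^2*d2 + 4*d1^2

/-- The function `ω(A,k,l)`. -/
def omega (d1 d2 A k l : ℝ) : ℝ :=
  (1/(d1^2*(d1+d2-1))) * (((2*d1 + d2*k)/d2)*omega2 d1 d2 k*A*l^2
    + (d2-1)*k*omega1 d1 d2 k*l - (d1-1)*k^2*omega0 d1 d2 k)

/-- The function `P_Y(A,k,l)`. -/
def PY (d1 d2 A k l : ℝ) : ℝ :=
  -((d1*((d1+d2)+d1-2) + d2*((d1+d2)+d1-1)*k)/(d2*((d1+d2)-1)))*A*l^2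
    + ((d2-1)*(d1 + d2*k - 1)/((d1+d2)-1))*l
    - ((d1-1)*(d1 + d2*k - k)/((d1+d2)-1))

/-- The function `ν₁(A,k)`. -/
def nu1 (d1 d2 A k : ℝ) : ℝ := d2*(d2-1)*k/(d1*A*(2*d1 + d2*k))

/-- The constant `Ψ`. -/
def Psi (d1 d2 : ℝ) : ℝ :=
  ((4*(d1-1)*(d1+d2)^2 + d2^2)*(3*(d1+d2) + d1)/((2*(d1+d2)^2 + (d1+d2) + d1)^2*d1^2))
    *(d2*(d2-1)^2/(4*(d1-1)))

/-- The function `ζ(A,k,l)`. -/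
def zeta (d1 d2 A k l : ℝ) : ℝ :=
  (-((d1 + d2*k)*(d1 + d2*k - 1)*(2*d1 + d2*k))/d2)*A*l^2
    + (((d2-1)/d1)*(d1 + d2*k)*(d2*k^2 + d2*(d1-1)*k + d1*(d1-1))
       - ((1-k)/d1)*((d1*d2^2 - 2*d1*d2 - d2^2 + d2)*k^2
          + (2*d1^2*d2 - 2*d1^2 - 2*d1*d2 + 2*d1)*k + d1^2*(d1-1))
         *(d2 - 1 - 2*d1^2*(d1+1)*A/(d2*(d2-1))))*l
    + (-(k*(d1-1)*(d1 + d2*k)*(d1 + d2*k + 1 - 2*k)))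

/-- The polynomial `β₀`. -/
def beta0 (d1 d2 k : ℝ) : ℝ :=
  (d1*d2^2 - 2*d1*d2 - d2^2 + d2)*k^2 + (2*d1^2*d2 - 2*d1^2 - d1*d2 + 2*d1)*k + d1^3 - d1

/-- The polynomial `β₁`. -/
def beta1 (d1 d2 k : ℝ) : ℝ :=
  (2*d1^2*d2^2 + d1*d2^3 - 4*d1^2*d2 - 2*d1*d2^2 - d2^3 - 2*d1*d2 + 2*d2)*k^2
    + (4*d1^3*d2 + 2*d1^2*d2^2 - 4*d1^3 - 2*d1^2*d2 - 3*d1*d2^2 + 4*d1*d2 + d2^2 + 4*d1 - 2*d2)*k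
    + 2*d1^4 + d1^3*d2 - 2*d1^2*d2 + 2*d1^2 + d1*d2 - 4*d1

/-- The polynomial `β₂`. -/
def beta2 (d1 d2 k : ℝ) : ℝ :=
  (d1*d2^3 - 2*d1*d2^2 - d2^3 + d2^2)*k^3
    + (2*d1^2*d2^2 - 4*d1^2*d2 - 2*d1*d2^2 + 2*d1*d2)*k^2
    + (d1^3*d2 - 2*d1^3 + d1^2*d2)*k + 2*d1^3

/-- The polynomial `ρ₁`. -/
def rho1 (d1 d2 k : ℝ) : ℝ :=
  4*d1^2*(d1-1)*(2*d2^2*k^2 + d2*k^2 + 4*d1*d2*k + 2*d1*k + 2*d1^2)^2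

/-- The polynomial `ρ₀`. -/
def rho0 (d1 d2 k : ℝ) : ℝ :=
  (d2-1)^2*k*d2*(4*d1 + 3*d2*k)*(4*(d1-1)*(d1 + d2*k)^2 + d2^2*k^2)

/-- The function `Ω`. -/
def OmegaFun (d1 d2 k : ℝ) : ℝ :=
  -(omega1 d1 d2 k^2*d2*(d2-1)^2)/(4*(d1-1)*(2*d1 + d2*k)*omega0 d1 d2 k*omega2 d1 d2 k)

/-- The polynomial `α₄`. -/
def alpha4 (d1 d2 k : ℝ) : ℝ :=
  (-d1^3*d2^3 + d1^2*d2^4 + 4*d1^3*d2^2 - 2*d1^2*d2^3 - 2*d1*d2^4 - d1^2*d2^2 + 4*d1*d2^3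
      + d2^4 - d1*d2^2 - d2^3)*k^3
    + (-2*d1^4*d2^2 + 4*d1^3*d2^3 + 8*d1^4*d2 - 8*d1^3*d2^2 - 8*d1^2*d2^3 - 8*d1^3*d2
      + 14*d1^2*d2^2 + 4*d1*d2^3 - 4*d1*d2^2)*k^2
    + (-d1^5*d2 + 5*d1^4*d2^2 + 4*d1^5 - 10*d1^4*d2 - 10*d1^3*d2^2 - 8*d1^4 + 17*d1^3*d2
      + 5*d1^2*d2^2 + 4*d1^3 - 6*d1^2*d2)*k
    + 2*d1^5*d2 - 4*d1^5 - 4*d1^4*d2 + 8*d1^4 + 2*d1^3*d2 - 4*d1^3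

/-- The function `ω̃₂`. -/
def omegaTilde2 (d1 d2 κ : ℝ) : ℝ :=
  1 + (d1-1)*(1-κ)*((-2*d1 + d2 - 2)*κ^2 + (2*d1 - 3*d2)*κ + 2*d2)/κ^3

/-- The factor `θ_{2a}`. -/
def theta2a (d1 d2 k : ℝ) : ℝ :=
  (d1*d2^3 - 2*d1*d2^2 - d2^3 - 2*d1*d2 + d2^2)*k^2
    + (2*d1^2*d2^2 - 2*d1^2*d2 - 2*d1*d2^2 - 4*d1^2 + 4*d1*d2)*k
    + d1^3*d2 - d1^2*d2 + 4*d1^2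

/-- The factor `θ_{2b}`. -/
def theta2b (d1 d2 k : ℝ) : ℝ :=
  (2*d1^2*d2^2 - d1*d2^3 + d2^3 - d2^2)*k^3
    + (4*d1^3*d2 - 4*d1^2*d2^2 - 2*d1^2*d2 + 4*d1*d2^2 - 2*d1*d2)*k^2
    + (2*d1^4 - 5*d1^3*d2 - 2*d1^3 + 5*d1^2*d2)*k - 2*d1^4 + 2*d1^3

/-- The factor `θ_{0a}`. -/
def theta0a (d1 d2 k : ℝ) : ℝ :=
  k*d2^2*(d2-1)^4*(2*d1 + d2*k)*((2*d1*d2 - 2*d1 + d2)*k + 2*d1^2 + 2*d1)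

/-- The factor `θ_{0b}`. -/
def theta0b (d1 d2 k : ℝ) : ℝ :=
  (2*d1^2 - 1)*d2^2*k^2 + (4*d1^3 - 2*d1^2 - 2*d1)*d2*k + 2*d1^3*(d1-1)

/-- The coefficient `θ₂`. -/
def theta2 (d1 d2 k : ℝ) : ℝ := 4*d1^4*(d1+1)^2*theta2a d1 d2 k*theta2b d1 d2 k

/-- The coefficient `θ₀`. -/
def theta0 (d1 d2 k : ℝ) : ℝ := theta0a d1 d2 k*theta0b d1 d2 k

/-- The function `F` of Statement 18. -/
def Ffun (d1 d2 k : ℝ) : ℝ :=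
  d2*(d2-1)^2*beta2 d1 d2 k/(d1^2*(2*d1 + d2*k)*omega0 d1 d2 k)

end PaperDefs

open PaperDefs

/-- if `0 < A < d2(d2-1)²/(d1²(2d1+d2))`, then for every `k ∈ (0,1)` the
quadratic `l ↦ ζ(A,k,l)` has exactly two real roots, both positive, and the smaller
root is strictly less than `ν₁(A,k)`. -/

private lemma quadRoots (a b c v : ℝ) (ha : a < 0) (hc : c < 0) (hv : 0 < v)
    (hq : 0 < a*v^2 + b*v + c) :
    ∃ l1 l2 : ℝ, 0 < l1 ∧ l1 < l2 ∧
      a*l1^2 + b*l1 + c = 0 ∧ a*l2^2 + b*l2 + c = 0 ∧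
      (∀ l : ℝ, a*l^2 + b*l + c = 0 → l = l1 ∨ l = l2) ∧ l1 < v := by
  have h2a : 2*a < 0 := by linarith
  have h2a' : (2*a) ≠ 0 := ne_of_lt h2a
  have hD : 0 < b^2 - 4*a*c := by
    nlinarith [sq_nonneg (2*a*v + b), mul_pos (show (0:ℝ) < -(4*a) by linarith) hq]
  set s := Real.sqrt (b^2 - 4*a*c) with hsdef
  have hs2 : s^2 = b^2 - 4*a*c := Real.sq_sqrt hD.le
  have hs0 : 0 < s := Real.sqrt_pos.mpr hD
  have key : ∀ l : ℝ, 4*a*(a*l^2 + b*l + c) = (2*a*l + b)^2 - s^2 := by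
    intro l; rw [hs2]; ring
  have hprod : (2*a*v + b - s)*(2*a*v + b + s) < 0 := by
    nlinarith [key v, mul_pos (show (0:ℝ) < -(4*a) by linarith) hq]
  have hv1 : 2*a*v + b - s < 0 := by
    rcases mul_neg_iff.mp hprod with ⟨h1, h2⟩ | ⟨h1, h2⟩ <;> linarith
  have hv2 : 0 < 2*a*v + b + s := by
    rcases mul_neg_iff.mp hprod with ⟨h1, h2⟩ | ⟨h1, h2⟩ <;> linarith
  have hbs : s < b := by
    nlinarith [mul_pos (neg_pos.mpr ha) (neg_pos.mpr hc), hs2, hv2,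
      mul_pos hv (neg_pos.mpr ha)]
  refine ⟨(-b+s)/(2*a), (-b-s)/(2*a), ?_, ?_, ?_, ?_, ?_, ?_⟩
  · exact div_pos_iff.mpr (Or.inr ⟨by linarith, h2a⟩)
  · have heq : (-b-s)/(2*a) - (-b+s)/(2*a) = (-2*s)/(2*a) := by ring
    have hp : 0 < (-2*s)/(2*a) := div_pos_iff.mpr (Or.inr ⟨by linarith, h2a⟩)
    linarith
  · have e := key ((-b+s)/(2*a))
    have e2 : 2*a*((-b+s)/(2*a)) + b = s := by rw [mul_div_assoc', mul_div_cancel_left₀ _ h2a']; ring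
    rw [e2] at e
    have e3 : 4*a*(a*((-b+s)/(2*a))^2 + b*((-b+s)/(2*a)) + c) = 0 := by rw [e]; ring
    rcases mul_eq_zero.mp e3 with h | h
    · exact absurd h (by intro hh; nlinarith)
    · exact h
  · have e := key ((-b-s)/(2*a))
    have e2 : 2*a*((-b-s)/(2*a)) + b = -s := by rw [mul_div_assoc', mul_div_cancel_left₀ _ h2a']; ring
    rw [e2] at e
    have e3 : 4*a*(a*((-b-s)/(2*a))^2 + b*((-b-s)/(2*a)) + c) = 0 := by rw [e]; ring
    rcases mul_eq_zero.mp e3 with h | h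
    · exact absurd h (by intro hh; nlinarith)
    · exact h
  · intro l hl
    have e := key l
    rw [hl] at e
    have hfac : (2*a*l + b - s)*(2*a*l + b + s) = 0 := by linear_combination -e
    rcases mul_eq_zero.mp hfac with h | h
    · left; rw [eq_div_iff h2a']; linear_combination h
    · right; rw [eq_div_iff h2a']; linear_combination h
  · have heq : v - (-b+s)/(2*a) = (2*a*v + b - s)/(2*a) := by rw [eq_div_iff h2a', sub_mul, div_mul_cancel₀ _ h2a']; ring
    have hpos : 0 < (2*a*v + b - s)/(2*a) := div_pos_iff.mpr (Or.inr ⟨hv1, h2a⟩)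
    linarith

private lemma auxE (x y k A : ℝ) (hx2 : 2 ≤ x) (hxy : x ≤ y) (hk0 : 0 < k)
    (hk1 : k < 1) (hA0 : 0 < A) (hA' : A*(x^2*(2*x+y)) < y*(y-1)^2) :
    0 < y*k^2*(y-1)^2*(y*(x*y-2*x-y+1)*k^2 + (2*x^2*(y-1)-x*(y-2))*k + x*(x-1)*(x+1))
      + x^2*k^2*(2*y*k - 2*y*k^2 - y^2*k + y^3*k^2 + 4*x - 4*x*k - x*y - 4*x*y*k
          + 2*x*y*k^2 + 3*x*y^2*k + 2*x*y^2*k^2 - x*y^3*k^2 - 2*x^2 + 2*x^2*y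
          + 2*x^2*y*k + 4*x^2*y*k^2 - 2*x^2*y^2*k - 2*x^2*y^2*k^2 + 4*x^3*k
          - x^3*y - 4*x^3*y*k - 2*x^4)*A := by
  have hx0 : (0:ℝ) < x := by linarith
  have hy2 : (2:ℝ) ≤ y := le_trans hx2 hxy
  have hy0 : (0:ℝ) < y := by linarith
  have hG0 : (0:ℝ) < x*(x-1)*(x+1) := by nlinarith
  have hB : (0:ℝ) < 2*(x*(x-1)*(x+1)) + (2*x^2*(y-1)-x*(y-2)) := by nlinarith
  have hG1 : (0:ℝ) < x^3 - 2*x^2 + 2*x^2*y + x - 3*x*y + x*y^2 + y - y^2 := by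
    linarith [mul_nonneg (show (0:ℝ) ≤ x-2 by linarith) (sq_nonneg (x+y)),
      mul_pos hx0 hy0, sq_nonneg y]
  have hG : (0:ℝ) < y*(x*y-2*x-y+1)*k^2 + (2*x^2*(y-1)-x*(y-2))*k + x*(x-1)*(x+1) := by
    linarith [mul_nonneg hG0.le (sq_nonneg (1-k)),
      mul_nonneg hB.le (mul_nonneg hk0.le (show (0:ℝ) ≤ 1-k by linarith)),
      mul_pos hG1 (pow_pos hk0 2)]
  have hC0 : (0:ℝ) < y*k^2*(y-1)^2*(y*(x*y-2*x-y+1)*k^2 + (2*x^2*(y-1)-x*(y-2))*k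
      + x*(x-1)*(x+1)) := by
    linarith [mul_pos (mul_pos (mul_pos hy0 (pow_pos hk0 2))
      (pow_pos (show (0:ℝ) < y-1 by linarith) 2)) hG]
  set c1 : ℝ := 2*y*k - 2*y*k^2 - y^2*k + y^3*k^2 + 4*x - 4*x*k - x*y - 4*x*y*k
      + 2*x*y*k^2 + 3*x*y^2*k + 2*x*y^2*k^2 - x*y^3*k^2 - 2*x^2 + 2*x^2*y
      + 2*x^2*y*k + 4*x^2*y*k^2 - 2*x^2*y^2*k - 2*x^2*y^2*k^2 + 4*x^3*k
      - x^3*y - 4*x^3*y*k - 2*x^4 with hc1def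
  rcases le_or_gt 0 c1 with h | h
  · have hnn : 0 ≤ x^2*k^2*c1*A :=
      mul_nonneg (mul_nonneg (mul_nonneg (sq_nonneg x) (sq_nonneg k)) h) hA0.le
    linarith
  · have h6 : 0 < x^2*k^2*(-c1) :=
      mul_pos (mul_pos (pow_pos hx0 2) (pow_pos hk0 2)) (neg_pos.mpr h)
    have h7 : x^2*k^2*(-c1)*(A*(x^2*(2*x+y))) < x^2*k^2*(-c1)*(y*(y-1)^2) :=
      mul_lt_mul_of_pos_left hA' h6
    have h8 : 0 ≤ x^2*y*k^2*(y-1)^2*((2*x+y)*(y*(x*y-2*x-y+1)*k^2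
        + (2*x^2*(y-1)-x*(y-2))*k + x*(x-1)*(x+1)) + c1) := by
      have hfac : (2*x+y)*(y*(x*y-2*x-y+1)*k^2 + (2*x^2*(y-1)-x*(y-2))*k
          + x*(x-1)*(x+1)) + c1 = (1-k)*(y-2)*(2*x*(x-1)+y*(2*x-1)*k) := by
        rw [hc1def]; ring
      rw [hfac]
      apply mul_nonneg
      · positivity
      · apply mul_nonneg (mul_nonneg (by linarith) (by linarith))
        linarith [mul_nonneg (mul_nonneg hy0.le (show (0:ℝ) ≤ 2*x-1 by linarith)) hk0.le,
          mul_nonneg hx0.le (show (0:ℝ) ≤ x-1 by linarith)]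
    have h9 : (0:ℝ) < x^2*(2*x+y) := by positivity
    have h10 : 0 < x^2*(2*x+y)*(y*k^2*(y-1)^2*(y*(x*y-2*x-y+1)*k^2
        + (2*x^2*(y-1)-x*(y-2))*k + x*(x-1)*(x+1)) + x^2*k^2*c1*A) := by
      linarith [h7, h8]
    by_contra hcon
    push_neg at hcon
    linarith [h10, mul_nonneg h9.le (neg_nonneg.mpr hcon)]

set_option maxHeartbeats 2000000 in
theorem statement3 (d1 d2 : ℕ) (h1 : 2 ≤ d1) (h2 : d1 ≤ d2) (A : ℝ)
    (hA0 : 0 < A) (hA : A < (d2:ℝ)*((d2:ℝ)-1)^2/((d1:ℝ)^2*(2*(d1:ℝ)+(d2:ℝ)))) :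
    ∀ k ∈ Set.Ioo (0:ℝ) 1, ∃ l1 l2 : ℝ,
      0 < l1 ∧ l1 < l2 ∧
      zeta d1 d2 A k l1 = 0 ∧ zeta d1 d2 A k l2 = 0 ∧
      (∀ l : ℝ, zeta d1 d2 A k l = 0 → l = l1 ∨ l = l2) ∧
      l1 < nu1 d1 d2 A k := by
  intro k hk
  obtain ⟨hk0, hk1⟩ := hk
  have hx2 : (2:ℝ) ≤ (d1:ℝ) := by exact_mod_cast h1
  have hxy : (d1:ℝ) ≤ (d2:ℝ) := by exact_mod_cast h2
  set x : ℝ := (d1:ℝ) with hxdef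
  set y : ℝ := (d2:ℝ) with hydef
  have hx0 : (0:ℝ) < x := by linarith
  have hy2 : (2:ℝ) ≤ y := le_trans hx2 hxy
  have hy0 : (0:ℝ) < y := by linarith
  have hyk : (0:ℝ) < y*k := mul_pos hy0 hk0
  have hxk : (0:ℝ) < x + y*k := by linarith
  have hxk1 : (0:ℝ) < x + y*k - 1 := by linarith
  have h2xk : (0:ℝ) < 2*x + y*k := by linarith
  have hv : 0 < nu1 x y A k := by
    unfold nu1
    exact div_pos (by nlinarith) (mul_pos (mul_pos hx0 hA0) h2xk)
  have ha : (-((x + y*k)*(x + y*k - 1)*(2*x + y*k))/y)*A < 0 := by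
    have hp : 0 < ((x + y*k)*(x + y*k - 1)*(2*x + y*k))*A :=
      mul_pos (mul_pos (mul_pos hxk hxk1) h2xk) hA0
    have heq : (-((x + y*k)*(x + y*k - 1)*(2*x + y*k))/y)*A
        = -(((x + y*k)*(x + y*k - 1)*(2*x + y*k))*A)/y := by ring
    rw [heq]
    exact div_neg_of_neg_of_pos (by linarith) hy0
  have hc : (-(k*(x-1)*(x + y*k)*(x + y*k + 1 - 2*k))) < 0 := by
    have : 0 < k*(x-1)*(x + y*k)*(x + y*k + 1 - 2*k) := by
      apply mul_pos (mul_pos (mul_pos hk0 (by linarith)) hxk)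
      linarith
    linarith
  have hA' : A*(x^2*(2*x+y)) < y*(y-1)^2 := by
    have hpos : (0:ℝ) < x^2*(2*x+y) := by positivity
    rw [lt_div_iff₀ hpos] at hA
    exact hA
  have hE := auxE x y k A hx2 hxy hk0 hk1 hA0 hA'
  have hkey : (((-((x + y*k)*(x + y*k - 1)*(2*x + y*k))/y)*A)*(nu1 x y A k)^2
      + (((y-1)/x)*(x + y*k)*(y*k^2 + y*(x-1)*k + x*(x-1))
         - ((1-k)/x)*((x*y^2 - 2*x*y - y^2 + y)*k^2
            + (2*x^2*y - 2*x^2 - 2*x*y + 2*x)*k + x^2*(x-1))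
           *(y - 1 - 2*x^2*(x+1)*A/(y*(y-1))))*(nu1 x y A k)
      + (-(k*(x-1)*(x + y*k)*(x + y*k + 1 - 2*k)))) * (x^2*A*(2*x+y*k))
    = y*k^2*(y-1)^2*(y*(x*y-2*x-y+1)*k^2 + (2*x^2*(y-1)-x*(y-2))*k + x*(x-1)*(x+1))
      + x^2*k^2*(2*y*k - 2*y*k^2 - y^2*k + y^3*k^2 + 4*x - 4*x*k - x*y - 4*x*y*k
          + 2*x*y*k^2 + 3*x*y^2*k + 2*x*y^2*k^2 - x*y^3*k^2 - 2*x^2 + 2*x^2*y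
          + 2*x^2*y*k + 4*x^2*y*k^2 - 2*x^2*y^2*k - 2*x^2*y^2*k^2 + 4*x^3*k
          - x^3*y - 4*x^3*y*k - 2*x^4)*A := by
    unfold nu1
    have hy1 : y - 1 ≠ 0 := by intro hh; linarith
    field_simp
    ring
  have hM : 0 < x^2*A*(2*x+y*k) := mul_pos (mul_pos (pow_pos hx0 2) hA0) h2xk
  have hq : 0 < ((-((x + y*k)*(x + y*k - 1)*(2*x + y*k))/y)*A)*(nu1 x y A k)^2
      + (((y-1)/x)*(x + y*k)*(y*k^2 + y*(x-1)*k + x*(x-1))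
         - ((1-k)/x)*((x*y^2 - 2*x*y - y^2 + y)*k^2
            + (2*x^2*y - 2*x^2 - 2*x*y + 2*x)*k + x^2*(x-1))
           *(y - 1 - 2*x^2*(x+1)*A/(y*(y-1))))*(nu1 x y A k)
      + (-(k*(x-1)*(x + y*k)*(x + y*k + 1 - 2*k))) := by
    by_contra hcon
    push_neg at hcon
    linarith [hkey, hE, mul_nonneg (neg_nonneg.mpr hcon) hM.le]
  have hz : ∀ l : ℝ, zeta x y A k l
      = ((-((x + y*k)*(x + y*k - 1)*(2*x + y*k))/y)*A)*l^2
      + (((y-1)/x)*(x + y*k)*(y*k^2 + y*(x-1)*k + x*(x-1))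
         - ((1-k)/x)*((x*y^2 - 2*x*y - y^2 + y)*k^2
            + (2*x^2*y - 2*x^2 - 2*x*y + 2*x)*k + x^2*(x-1))
           *(y - 1 - 2*x^2*(x+1)*A/(y*(y-1))))*l
      + (-(k*(x-1)*(x + y*k)*(x + y*k + 1 - 2*k))) := by
    intro l; unfold zeta; ring
  simp only [hz]
  exact quadRoots _ _ _ (nu1 x y A k) ha hc hv hq
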